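/- arXiv:0707.0115 — 4 statements merged into one kernel-verified Lean document; each statement's English description precedes it below -/
import Mathlib

section
/- Let x_1, ..., x_{n+1} be pairwise distinct elements of a field and m ≥ n. Then the sum over all tuples (i_1, ..., i_{n+1}) of nonnegative integers with i_1 + ... + i_{n+1} = m - n of x_1^{i_1} x_2^{i_2} ⋯ x_{n+1}^{i_{n+1}} equals ∑_{i=1}^{n+1} x_i^m / ∏_{j ≠ i} (x_i - x_j). -/
open Finset Polynomial

/-- Leading coefficient of the Lagrange basis polynomial. -/
lemma coeff_basis_aux {K : Type*} [Field K] {N : ℕ} (v : Fin (N + 1) → K)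
    (hv : Function.Injective v) (i : Fin (N + 1)) :
    (Lagrange.basis Finset.univ v i).coeff N
      = (∏ j ∈ Finset.univ.erase i, (v i - v j))⁻¹ := by
  have hinj : Set.InjOn v (Finset.univ : Finset (Fin (N + 1))) := hv.injOn
  have hdeg : (Lagrange.basis Finset.univ v i).natDegree = N := by
    rw [Lagrange.natDegree_basis hinj (Finset.mem_univ i)]
    simp
  have hlc : (Lagrange.basis Finset.univ v i).coeff N
      = (Lagrange.basis Finset.univ v i).leadingCoeff := by
    rw [Polynomial.leadingCoeff, hdeg]
  rw [hlc]
  unfold Lagrange.basis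
  rw [Polynomial.leadingCoeff_prod, ← Finset.prod_inv_distrib]
  refine Finset.prod_congr rfl fun j hj => ?_
  have hij : v i - v j ≠ 0 := by
    rw [sub_ne_zero]
    exact fun h => (Finset.mem_erase.mp hj).1.symm (hv h)
  unfold Lagrange.basisDivisor
  rw [Polynomial.leadingCoeff_mul, Polynomial.leadingCoeff_C,
    (Polynomial.monic_X_sub_C (v j)).leadingCoeff, mul_one]

/-- Vanishing lemma: power sums over Lagrange weights vanish for small exponents. -/
lemma sum_pow_div_prod_eq_zero {K : Type*} [Field K] {N k : ℕ} (hk : k < N)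
    (v : Fin (N + 1) → K) (hv : Function.Injective v) :
    ∑ i, v i ^ k / ∏ j ∈ Finset.univ.erase i, (v i - v j) = 0 := by
  have hinj : Set.InjOn v (Finset.univ : Finset (Fin (N + 1))) := hv.injOn
  have hdeg : (Polynomial.X ^ k : K[X]).degree < (Finset.univ : Finset (Fin (N + 1))).card := by
    rw [Polynomial.degree_X_pow]
    simp only [Finset.card_univ, Fintype.card_fin]
    exact_mod_cast hk.trans (Nat.lt_succ_self N)
  have h := Lagrange.eq_interpolate (f := (Polynomial.X ^ k : K[X])) hinj hdeg
  have h2 := congrArg (fun p : K[X] => p.coeff N) h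
  simp only [Lagrange.interpolate_apply, Polynomial.finset_sum_coeff,
    Polynomial.coeff_C_mul, Polynomial.coeff_X_pow, if_neg hk.ne',
    Polynomial.eval_pow, Polynomial.eval_X] at h2
  calc ∑ i, v i ^ k / ∏ j ∈ Finset.univ.erase i, (v i - v j)
      = ∑ i, v i ^ k * (Lagrange.basis Finset.univ v i).coeff N := by
        refine Finset.sum_congr rfl fun i _ => ?_
        rw [coeff_basis_aux v hv i, div_eq_mul_inv]
    _ = 0 := h2.symm

/-- Splitting the sum over antidiagonal tuples along the first coordinate. -/
lemma antidiagonalTuple_succ_sum {M : Type*} [AddCommMonoid M] (k N : ℕ)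
    (F : (Fin (k + 1) → ℕ) → M) :
    ∑ c ∈ Finset.Nat.antidiagonalTuple (k + 1) N, F c
      = ∑ p ∈ Finset.HasAntidiagonal.antidiagonal N,
          ∑ d ∈ Finset.Nat.antidiagonalTuple k p.2, F (Fin.cons p.1 d) := by
  have hsig := Finset.sum_sigma (Finset.HasAntidiagonal.antidiagonal N)
    (fun p => Finset.Nat.antidiagonalTuple k p.2)
    (fun z => F (Fin.cons z.1.1 z.2))
  rw [← hsig]
  refine Finset.sum_nbij'
    (fun (c : Fin (k + 1) → ℕ) => (⟨(c 0, ∑ i : Fin k, c i.succ), Fin.tail c⟩ : (_ : ℕ × ℕ) × (Fin k → ℕ)))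
    (fun z => Fin.cons z.1.1 z.2) ?_ ?_ ?_ ?_ ?_
  · intro c hc
    rw [Finset.Nat.mem_antidiagonalTuple] at hc
    refine Finset.mem_sigma.mpr ⟨?_, ?_⟩
    · rw [Finset.HasAntidiagonal.mem_antidiagonal]
      rw [← hc, Fin.sum_univ_succ]
    · rw [Finset.Nat.mem_antidiagonalTuple]
      rfl
  · intro x hx
    rw [Finset.mem_sigma, Finset.HasAntidiagonal.mem_antidiagonal, Finset.Nat.mem_antidiagonalTuple] at hx
    rw [Finset.Nat.mem_antidiagonalTuple, Fin.sum_univ_succ]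
    simp only [Fin.cons_zero, Fin.cons_succ]
    rw [hx.2, hx.1]
  · intro c hc
    exact Fin.cons_self_tail c
  · rintro ⟨⟨a, b⟩, d⟩ hz
    rw [Finset.mem_sigma, Finset.HasAntidiagonal.mem_antidiagonal, Finset.Nat.mem_antidiagonalTuple] at hz
    simp only [Fin.cons_zero, Fin.cons_succ, Fin.tail_cons]
    rw [hz.2]
  · intro c hc
    simp only [Fin.cons_self_tail]

lemma erase_succ_prod {M : Type*} [CommMonoid M] {k : ℕ} (i : Fin (k + 1))
    (f : Fin (k + 2) → M) :
    ∏ j ∈ Finset.univ.erase i.succ, f j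
      = f 0 * ∏ j ∈ Finset.univ.erase i, f j.succ := by
  have hset : (Finset.univ.erase i.succ : Finset (Fin (k + 2)))
      = insert 0 ((Finset.univ.erase i).image Fin.succ) := by
    ext j
    constructor
    · intro hj
      have hj' : j ≠ i.succ := (Finset.mem_erase.mp hj).1
      rcases Fin.eq_zero_or_eq_succ j with h0 | ⟨l, rfl⟩
      · exact Finset.mem_insert.mpr (Or.inl h0)
      · refine Finset.mem_insert.mpr (Or.inr (Finset.mem_image.mpr ⟨l, ?_, rfl⟩))
        exact Finset.mem_erase.mpr ⟨fun h => hj' (by rw [h]), Finset.mem_univ l⟩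
    · intro hj
      rcases Finset.mem_insert.mp hj with h0 | him
      · subst h0
        exact Finset.mem_erase.mpr ⟨(Fin.succ_ne_zero i).symm, Finset.mem_univ _⟩
      · obtain ⟨l, hl, rfl⟩ := Finset.mem_image.mp him
        exact Finset.mem_erase.mpr
          ⟨fun h => (Finset.mem_erase.mp hl).1 (Fin.succ_injective _ h), Finset.mem_univ _⟩
  have h0 : (0 : Fin (k + 2)) ∉ (Finset.univ.erase i).image Fin.succ := by
    simp only [Finset.mem_image, not_exists]
    rintro l ⟨_, hl⟩
    exact Fin.succ_ne_zero l hl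
  rw [hset, Finset.prod_insert h0,
    Finset.prod_image (fun a _ b _ h => Fin.succ_injective _ h)]

lemma geom_aux {K : Type*} [Field K] (Kn : ℕ) (y z : K) (hyz : z ≠ y) :
    ∑ p ∈ Finset.HasAntidiagonal.antidiagonal Kn, y ^ p.1 * z ^ p.2
      = (z ^ (Kn + 1) - y ^ (Kn + 1)) / (z - y) := by
  rw [eq_div_iff (sub_ne_zero.mpr hyz)]
  rw [Finset.Nat.sum_antidiagonal_eq_sum_range_succ_mk]
  rw [← geom_sum₂_mul (R := K) z y (Kn + 1)]
  congr 1
  rw [← Finset.sum_range_reflect]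
  refine Finset.sum_congr rfl fun i hi => ?_
  rw [Finset.mem_range] at hi
  have h1 : Kn + 1 - 1 - i = Kn - i := by omega
  have h2 : Kn - (Kn - i) = i := by omega
  rw [h1, h2, mul_comm]

theorem stmt4 {K : Type*} [Field K] (n m : ℕ) (hmn : n ≤ m)
    (x : Fin (n + 1) → K) (hx : Function.Injective x) :
    ∑ c ∈ Finset.Nat.antidiagonalTuple (n + 1) (m - n), ∏ i, x i ^ c i
      = ∑ i, x i ^ m / ∏ j ∈ Finset.univ.erase i, (x i - x j) := by
  induction n generalizing m with
  | zero =>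
    simp [Fin.prod_univ_succ]
  | succ n IH =>
    set y : Fin (n + 1) → K := fun i => x i.succ with hy
    have hyinj : Function.Injective y := fun a b h => by
      have := hx h
      exact Fin.succ_injective _ this
    have hy0 : ∀ i : Fin (n + 1), y i ≠ x 0 := fun i h => Fin.succ_ne_zero i (hx h)
    set Kn := m - (n + 1) with hKn
    have hK1 : Kn + 1 = m - n := by omega
    -- denominators
    set P : Fin (n + 2) → K := fun j => ∏ l ∈ Finset.univ.erase j, (x j - x l) with hP
    have hPsucc : ∀ i : Fin (n + 1),
        P i.succ = (y i - x 0) * ∏ l ∈ Finset.univ.erase i, (y i - y l) := by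
      intro i
      rw [hP]
      exact erase_succ_prod i (fun l => x i.succ - x l)
    have hD : ∀ i : Fin (n + 1), (∏ l ∈ Finset.univ.erase i, (y i - y l)) ≠ 0 := by
      intro i
      refine Finset.prod_ne_zero_iff.mpr fun l hl => ?_
      rw [sub_ne_zero]
      exact fun h => (Finset.mem_erase.mp hl).1.symm (hyinj h)
    -- split LHS along the first coordinate
    rw [antidiagonalTuple_succ_sum]
    have step1 : ∀ p ∈ Finset.HasAntidiagonal.antidiagonal Kn,
        ∑ d ∈ Finset.Nat.antidiagonalTuple (n + 1) p.2,
          ∏ i, x i ^ (Fin.cons p.1 d : Fin (n + 2) → ℕ) i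
        = x 0 ^ p.1 * ∑ i, y i ^ (p.2 + n) / ∏ l ∈ Finset.univ.erase i, (y i - y l) := by
      intro p hp
      rw [← IH (p.2 + n) (Nat.le_add_left n p.2) y hyinj]
      rw [Finset.mul_sum]
      have : p.2 + n - n = p.2 := by omega
      rw [this]
      refine Finset.sum_congr rfl fun d _ => ?_
      rw [Fin.prod_univ_succ]
      simp only [Fin.cons_zero, Fin.cons_succ]
      rfl
    rw [Finset.sum_congr rfl step1]
    -- swap sums
    rw [Finset.sum_congr rfl (fun p _ => Finset.mul_sum (Finset.univ)
      (fun i => y i ^ (p.2 + n) / ∏ l ∈ Finset.univ.erase i, (y i - y l)) (x 0 ^ p.1)),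
      Finset.sum_comm]
    -- compute each inner geometric sum
    have step2 : ∀ i : Fin (n + 1),
        ∑ p ∈ Finset.HasAntidiagonal.antidiagonal Kn,
          x 0 ^ p.1 * (y i ^ (p.2 + n) / ∏ l ∈ Finset.univ.erase i, (y i - y l))
        = (y i ^ m - x 0 ^ (m - n) * y i ^ n) / P i.succ := by
      intro i
      have hsum : ∑ p ∈ Finset.HasAntidiagonal.antidiagonal Kn, x 0 ^ p.1 * y i ^ (p.2 + n)
          = (y i ^ (Kn + 1) - x 0 ^ (Kn + 1)) / (y i - x 0) * y i ^ n := by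
        rw [← geom_aux Kn (x 0) (y i) (hy0 i), Finset.sum_mul]
        refine Finset.sum_congr rfl fun p _ => ?_
        rw [pow_add]; ring
      calc ∑ p ∈ Finset.HasAntidiagonal.antidiagonal Kn,
            x 0 ^ p.1 * (y i ^ (p.2 + n) / ∏ l ∈ Finset.univ.erase i, (y i - y l))
          = (∑ p ∈ Finset.HasAntidiagonal.antidiagonal Kn, x 0 ^ p.1 * y i ^ (p.2 + n))
              / ∏ l ∈ Finset.univ.erase i, (y i - y l) := by
            rw [Finset.sum_div]
            refine Finset.sum_congr rfl fun p _ => ?_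
            rw [mul_div_assoc]
        _ = (y i ^ m - x 0 ^ (m - n) * y i ^ n) / P i.succ := by
            rw [hsum, hPsucc i, hK1, div_mul_eq_mul_div, div_div]
            congr 1
            rw [sub_mul, ← pow_add]
            congr 2
            omega
    rw [Finset.sum_congr rfl fun i _ => step2 i]
    -- use the vanishing lemma
    have hvan := sum_pow_div_prod_eq_zero (N := n + 1) (k := n) (Nat.lt_succ_self n) x hx
    rw [Fin.sum_univ_succ] at hvan
    have key : ∑ i : Fin (n + 1), (y i ^ m - x 0 ^ (m - n) * y i ^ n) / P i.succ
        = (∑ i : Fin (n + 1), y i ^ m / P i.succ)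
          - x 0 ^ (m - n) * ∑ i : Fin (n + 1), y i ^ n / P i.succ := by
      rw [Finset.mul_sum, ← Finset.sum_sub_distrib]
      refine Finset.sum_congr rfl fun i _ => ?_
      rw [sub_div, mul_div_assoc]
    rw [key]
    have hvan2 : ∑ i : Fin (n + 1), y i ^ n / P i.succ
        = -(x 0 ^ n / P 0) := by
      have h' : x 0 ^ n / P 0 + ∑ i : Fin (n + 1), y i ^ n / P i.succ = 0 := hvan
      rw [add_comm] at h'
      exact eq_neg_of_add_eq_zero_left h'
    rw [hvan2]
    have hx0m : x 0 ^ (m - n) * (x 0 ^ n / P 0) = x 0 ^ m / P 0 := by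
      rw [mul_div_assoc', ← pow_add]
      congr 2
      omega
    rw [mul_neg, sub_neg_eq_add, hx0m]
    conv_rhs => rw [Fin.sum_univ_succ]
    simp only [hP, hy]
    ring
end

section
/- For every natural number n, the number of integer pairs (I, J) with 0 ≤ I ≤ J ≤ n + 1 - I - J equals ⌊((n+4)^2 + 4)/12⌋. -/
open Finset

def fC (n : ℕ) : ℕ :=
  ((Finset.range (n + 2) ×ˢ Finset.range (n + 2)).filter
        (fun p => p.1 ≤ p.2 ∧ p.1 + 2 * p.2 ≤ n + 1)).card

lemma fext (n N : ℕ) (h : n + 2 ≤ N) :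
    fC n = ((Finset.range N ×ˢ Finset.range N).filter
        (fun p => p.1 ≤ p.2 ∧ p.1 + 2 * p.2 ≤ n + 1)).card := by
  unfold fC
  congr 1
  ext ⟨a, b⟩
  simp only [Finset.mem_filter, Finset.mem_product, Finset.mem_range]
  omega

lemma cardD (n : ℕ) :
    ((Finset.range (n + 3) ×ˢ Finset.range (n + 3)).filter
        (fun p => p.1 ≤ p.2 ∧ p.1 + 2 * p.2 = n + 2)).card
      = (n + 2) / 2 + 1 - (n + 4) / 3 := by
  have himg : ((Finset.range (n + 3) ×ˢ Finset.range (n + 3)).filter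
        (fun p => p.1 ≤ p.2 ∧ p.1 + 2 * p.2 = n + 2))
      = (Finset.Ico ((n + 4) / 3) ((n + 2) / 2 + 1)).image
          (fun j => (n + 2 - 2 * j, j)) := by
    ext ⟨a, b⟩
    simp only [Finset.mem_filter, Finset.mem_product, Finset.mem_range,
      Finset.mem_image, Finset.mem_Ico, Prod.mk.injEq]
    constructor
    · rintro ⟨⟨_, _⟩, hab, hs⟩
      exact ⟨b, by omega, by omega, rfl⟩
    · rintro ⟨j, hj, rfl, rfl⟩
      omega
  rw [himg, Finset.card_image_of_injective _ (fun x y h => by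
    simpa using congrArg Prod.snd h), Nat.card_Ico]

lemma fstep (n : ℕ) : fC (n + 1) = fC n + ((n + 2) / 2 + 1 - (n + 4) / 3) := by
  have h1 : fC (n + 1) = ((Finset.range (n + 3) ×ˢ Finset.range (n + 3)).filter
      (fun p => p.1 ≤ p.2 ∧ p.1 + 2 * p.2 ≤ n + 2)).card := fext (n + 1) (n + 3) (by omega)
  have h2 := fext n (n + 3) (by omega)
  have hsplit : ((Finset.range (n + 3) ×ˢ Finset.range (n + 3)).filter
      (fun p => p.1 ≤ p.2 ∧ p.1 + 2 * p.2 ≤ n + 2))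
    = ((Finset.range (n + 3) ×ˢ Finset.range (n + 3)).filter
      (fun p => p.1 ≤ p.2 ∧ p.1 + 2 * p.2 ≤ n + 1))
      ∪ ((Finset.range (n + 3) ×ˢ Finset.range (n + 3)).filter
      (fun p => p.1 ≤ p.2 ∧ p.1 + 2 * p.2 = n + 2)) := by
    ext ⟨a, b⟩
    simp only [Finset.mem_filter, Finset.mem_product, Finset.mem_range, Finset.mem_union]
    omega
  have hdisj : Disjoint ((Finset.range (n + 3) ×ˢ Finset.range (n + 3)).filter
      (fun p => p.1 ≤ p.2 ∧ p.1 + 2 * p.2 ≤ n + 1))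
      ((Finset.range (n + 3) ×ˢ Finset.range (n + 3)).filter
      (fun p => p.1 ≤ p.2 ∧ p.1 + 2 * p.2 = n + 2)) := by
    rw [Finset.disjoint_left]
    intro ⟨a, b⟩ ha hb
    simp only [Finset.mem_filter, Finset.mem_product, Finset.mem_range] at ha hb
    omega
  rw [h1, hsplit, Finset.card_union_of_disjoint hdisj, ← h2, cardD]

lemma fmain (n : ℕ) : fC n = ((n + 4) ^ 2 + 4) / 12 := by
  induction n using Nat.strong_induction_on with
  | _ n ih =>
    rcases lt_or_ge n 6 with h | h
    · interval_cases n <;> decide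
    · obtain ⟨m, rfl⟩ : ∃ m, n = m + 6 := ⟨n - 6, by omega⟩
      have h0 : fC (m + 1) = fC m + ((m + 2) / 2 + 1 - (m + 4) / 3) := fstep m
      have h1 : fC (m + 2) = fC (m + 1) + ((m + 1 + 2) / 2 + 1 - (m + 1 + 4) / 3) := fstep (m + 1)
      have h2 : fC (m + 3) = fC (m + 2) + ((m + 2 + 2) / 2 + 1 - (m + 2 + 4) / 3) := fstep (m + 2)
      have h3 : fC (m + 4) = fC (m + 3) + ((m + 3 + 2) / 2 + 1 - (m + 3 + 4) / 3) := fstep (m + 3)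
      have h4 : fC (m + 5) = fC (m + 4) + ((m + 4 + 2) / 2 + 1 - (m + 4 + 4) / 3) := fstep (m + 4)
      have h5 : fC (m + 6) = fC (m + 5) + ((m + 5 + 2) / 2 + 1 - (m + 5 + 4) / 3) := fstep (m + 5)
      have hIH : fC m = ((m + 4) ^ 2 + 4) / 12 := ih m (by omega)
      have hsq : (m + 6 + 4) ^ 2 + 4 = ((m + 4) ^ 2 + 4) + 12 * (m + 7) := by ring
      rw [hsq]
      have hsum : ((m + 2) / 2 + 1 - (m + 4) / 3) + ((m + 1 + 2) / 2 + 1 - (m + 1 + 4) / 3)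
          + ((m + 2 + 2) / 2 + 1 - (m + 2 + 4) / 3) + ((m + 3 + 2) / 2 + 1 - (m + 3 + 4) / 3)
          + ((m + 4 + 2) / 2 + 1 - (m + 4 + 4) / 3) + ((m + 5 + 2) / 2 + 1 - (m + 5 + 4) / 3)
          = m + 7 := by
        obtain ⟨q, r, hr, hm⟩ : ∃ q r, r < 6 ∧ m = 6 * q + r :=
          ⟨m / 6, m % 6, Nat.mod_lt _ (by norm_num), by omega⟩
        subst hm
        interval_cases r <;> omega
      have hchain : fC (m + 6) = fC m + (m + 7) := by omega
      generalize (m + 4) ^ 2 = a at hIH ⊢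
      have hdiv : (a + 4 + 12 * (m + 7)) / 12 = (a + 4) / 12 + (m + 7) := by omega
      omega

theorem stmt8 (n : ℕ) :
    ((Finset.range (n + 2) ×ˢ Finset.range (n + 2)).filter
        (fun p => p.1 ≤ p.2 ∧ p.1 + 2 * p.2 ≤ n + 1)).card
      = ((n + 4) ^ 2 + 4) / 12 := by
  exact fmain n
end

section
/- Let A be a real symmetric positive definite n × n matrix with spectral decomposition A = ∑_i α_i P_i (α_i > 0 distinct eigenvalues, P_i orthogonal spectral projectors with P_i P_j = δ_{ij} P_i and ∑ P_i = I). Then the linear map L on matrices defined by L(X) = ∑_{i,j} ((α_i - α_j)/(α_i^m - α_j^m)) P_i X P_j (with the convention that the coefficient is 1/(m α_i^{m-1}) when i = j) satisfies: for every matrix C, X = L(C) solves ∑_{k=1}^{m} A^{m-k} X A^{k-1} = C. -/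
theorem stmt14 {n d : ℕ}
    (A : Matrix (Fin n) (Fin n) ℝ) (hA : A.IsSymm)
    (α : Fin d → ℝ) (hαpos : ∀ i, 0 < α i) (hαinj : Function.Injective α)
    (P : Fin d → Matrix (Fin n) (Fin n) ℝ) (hPsymm : ∀ i, (P i).IsSymm)
    (hProj : ∀ i j, P i * P j = if i = j then P i else 0)
    (hPsum : ∑ i, P i = 1)
    (hspec : A = ∑ i, α i • P i)
    (m : ℕ) (hm : 1 ≤ m)
    (C : Matrix (Fin n) (Fin n) ℝ) :
    ∑ k ∈ Finset.Icc 1 m,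
        A ^ (m - k) *
          (∑ i, ∑ j,
            (if i = j then 1 / (m * α i ^ (m - 1))
              else (α i - α j) / (α i ^ m - α j ^ m)) • (P i * C * P j)) *
          A ^ (k - 1)
      = C := by
  have hpow : ∀ t : ℕ, A ^ t = ∑ i, α i ^ t • P i := by
    intro t
    induction t with
    | zero => simp [← hPsum]
    | succ t ih =>
      rw [pow_succ, ih, hspec, Finset.sum_mul_sum]
      simp only [smul_mul_assoc, mul_smul_comm, hProj, smul_smul, smul_ite, smul_zero]
      simp [Finset.sum_ite_eq, pow_succ, mul_comm]
  have hAP : ∀ (t : ℕ) (i : Fin d), A ^ t * P i = α i ^ t • P i := by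
    intro t i
    rw [hpow t, Finset.sum_mul]
    simp only [smul_mul_assoc, hProj, smul_ite, smul_zero]
    simp [Finset.sum_ite_eq']
  have hPA : ∀ (t : ℕ) (i : Fin d), P i * A ^ t = α i ^ t • P i := by
    intro t i
    rw [hpow t, Finset.mul_sum]
    simp only [mul_smul_comm, hProj, smul_ite, smul_zero]
    simp [Finset.sum_ite_eq]
  have hscal : ∀ i j : Fin d,
      (if i = j then 1 / ((m : ℝ) * α i ^ (m - 1))
        else (α i - α j) / (α i ^ m - α j ^ m)) *
        (∑ k ∈ Finset.Icc 1 m, α i ^ (m - k) * α j ^ (k - 1)) = 1 := by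
    intro i j
    have hsum : (∑ k ∈ Finset.Icc 1 m, α i ^ (m - k) * α j ^ (k - 1))
        = ∑ l ∈ Finset.range m, α j ^ l * α i ^ (m - 1 - l) := by
      rw [← Finset.Ico_add_one_right_eq_Icc, Finset.sum_Ico_eq_sum_range]
      apply Finset.sum_congr (by simp)
      intro l hl
      have : m - (1 + l) = m - 1 - l := by omega
      rw [this, mul_comm]
      congr 2
      omega
    by_cases hij : i = j
    · subst hij
      simp only [if_pos rfl, hsum]
      have : ∀ l ∈ Finset.range m, α i ^ l * α i ^ (m - 1 - l) = α i ^ (m - 1) := by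
        intro l hl
        rw [← pow_add]
        congr 1
        simp at hl
        omega
      rw [Finset.sum_congr rfl this, Finset.sum_const, Finset.card_range, nsmul_eq_mul]
      have h1 : (m : ℝ) ≠ 0 := Nat.cast_ne_zero.mpr (by omega)
      have h2 : α i ^ (m - 1) ≠ 0 := pow_ne_zero _ (hαpos i).ne'
      rw [if_pos trivial]
      field_simp
    · have hne : α i ≠ α j := fun h => hij (hαinj h)
      have hnem : α i ^ m ≠ α j ^ m := by
        rcases lt_or_gt_of_ne hne with h | h
        · exact ne_of_lt (pow_lt_pow_left₀ h (hαpos i).le (by omega))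
        · exact (ne_of_lt (pow_lt_pow_left₀ h (hαpos j).le (by omega))).symm
      have hgeom := geom_sum₂_mul (α j) (α i) m
      simp only [if_neg hij, hsum]
      have hsv : (∑ l ∈ Finset.range m, α j ^ l * α i ^ (m - 1 - l))
          = (α j ^ m - α i ^ m) / (α j - α i) := by
        rw [eq_div_iff (sub_ne_zero.mpr hne.symm), hgeom]
      rw [hsv, div_mul_div_comm, div_eq_one_iff_eq
        (mul_ne_zero (sub_ne_zero.mpr hnem) (sub_ne_zero.mpr hne.symm))]
      ring
  -- now rewrite LHS
  have key : ∀ k ∈ Finset.Icc 1 m,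
      A ^ (m - k) *
        (∑ i, ∑ j,
          (if i = j then 1 / ((m:ℝ) * α i ^ (m - 1))
            else (α i - α j) / (α i ^ m - α j ^ m)) • (P i * C * P j)) *
        A ^ (k - 1)
      = ∑ i, ∑ j,
          ((if i = j then 1 / ((m:ℝ) * α i ^ (m - 1))
            else (α i - α j) / (α i ^ m - α j ^ m)) *
            (α i ^ (m - k) * α j ^ (k - 1))) • (P i * C * P j) := by
    intro k _
    rw [Finset.mul_sum, Finset.sum_mul]
    apply Finset.sum_congr rfl; intro i _
    rw [Finset.mul_sum, Finset.sum_mul]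
    apply Finset.sum_congr rfl; intro j _
    rw [mul_smul_comm, smul_mul_assoc]
    have h : A ^ (m - k) * (P i * C * P j) * A ^ (k - 1)
        = (α i ^ (m - k) * α j ^ (k - 1)) • (P i * C * P j) := by
      have e1 : A ^ (m - k) * (P i * C * P j) * A ^ (k - 1)
          = (A ^ (m - k) * P i) * C * (P j * A ^ (k - 1)) := by
        simp only [mul_assoc]
      rw [e1, hAP, hPA, smul_mul_assoc, smul_mul_assoc, mul_smul_comm, smul_smul]
    rw [h, smul_smul]
  rw [Finset.sum_congr rfl key]
  rw [Finset.sum_comm]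
  have : ∀ i : Fin d, (∑ k ∈ Finset.Icc 1 m, ∑ j,
      ((if i = j then 1 / ((m:ℝ) * α i ^ (m - 1))
        else (α i - α j) / (α i ^ m - α j ^ m)) *
        (α i ^ (m - k) * α j ^ (k - 1))) • (P i * C * P j))
      = ∑ j, P i * C * P j := by
    intro i
    rw [Finset.sum_comm]
    apply Finset.sum_congr rfl; intro j _
    rw [← Finset.sum_smul]
    rw [show (∑ k ∈ Finset.Icc 1 m,
      (if i = j then 1 / ((m:ℝ) * α i ^ (m - 1))
        else (α i - α j) / (α i ^ m - α j ^ m)) *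
        (α i ^ (m - k) * α j ^ (k - 1)))
      = (if i = j then 1 / ((m:ℝ) * α i ^ (m - 1))
        else (α i - α j) / (α i ^ m - α j ^ m)) *
        (∑ k ∈ Finset.Icc 1 m, α i ^ (m - k) * α j ^ (k - 1)) from
      (Finset.mul_sum _ _ _).symm]
    rw [hscal i j, one_smul]
  rw [Finset.sum_congr rfl (fun i _ => this i)]
  have : (∑ i, ∑ j, P i * C * P j) = (∑ i, P i) * C * (∑ j, P j) := by
    simp [Finset.sum_mul, Finset.mul_sum]
    exact Finset.sum_comm
  rw [this, hPsum]
  simp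
end

section
/- For a positive definite symmetric matrix A with spectral projectors P_i and distinct eigenvalues α_i, the operator J(A) : X ↦ A X - X A and the operator J*(A) : X ↦ ∑_{i≠j} (α_i - α_j)^{-1} P_i X P_j satisfy the Moore–Penrose equations J J* J = J and J* J J* = J*. -/
theorem stmt16 {n d : ℕ}
    (A : Matrix (Fin n) (Fin n) ℝ) (hA : A.IsSymm)
    (α : Fin d → ℝ) (hαpos : ∀ i, 0 < α i) (hαinj : Function.Injective α)
    (P : Fin d → Matrix (Fin n) (Fin n) ℝ) (hPsymm : ∀ i, (P i).IsSymm)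
    (hProj : ∀ i j, P i * P j = if i = j then P i else 0)
    (hPsum : ∑ i, P i = 1)
    (hspec : A = ∑ i, α i • P i) :
    (∀ X : Matrix (Fin n) (Fin n) ℝ,
      (A * (∑ i, ∑ j ∈ Finset.univ.erase i, (α i - α j)⁻¹ • (P i * (A * X - X * A) * P j))
        - (∑ i, ∑ j ∈ Finset.univ.erase i, (α i - α j)⁻¹ • (P i * (A * X - X * A) * P j)) * A)
        = A * X - X * A) ∧
    (∀ X : Matrix (Fin n) (Fin n) ℝ,
      (∑ i, ∑ j ∈ Finset.univ.erase i, (α i - α j)⁻¹ •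
          (P i * (A * (∑ i', ∑ j' ∈ Finset.univ.erase i', (α i' - α j')⁻¹ • (P i' * X * P j'))
            - (∑ i', ∑ j' ∈ Finset.univ.erase i', (α i' - α j')⁻¹ • (P i' * X * P j')) * A) * P j))
        = ∑ i, ∑ j ∈ Finset.univ.erase i, (α i - α j)⁻¹ • (P i * X * P j)) := by
  have hAP : ∀ i, A * P i = α i • P i := by
    intro i
    rw [hspec, Finset.sum_mul]
    have h : ∀ j : Fin d, (α j • P j) * P i = if j = i then α i • P i else 0 := by
      intro j
      rw [smul_mul_assoc, hProj]
      split
      · subst ‹j = i›; rfl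
      · simp
    simp [h]
  have hPA : ∀ i, P i * A = α i • P i := by
    intro i
    rw [hspec, Finset.mul_sum]
    have h : ∀ j : Fin d, P i * (α j • P j) = if i = j then α i • P i else 0 := by
      intro j
      rw [mul_smul_comm, hProj]
      split
      · subst ‹i = j›; rfl
      · simp
    simp [h]
  -- key commutator computation
  have key : ∀ M : Matrix (Fin n) (Fin n) ℝ,
      A * (∑ i, ∑ j ∈ Finset.univ.erase i, (α i - α j)⁻¹ • (P i * M * P j))
        - (∑ i, ∑ j ∈ Finset.univ.erase i, (α i - α j)⁻¹ • (P i * M * P j)) * A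
        = ∑ i, ∑ j ∈ Finset.univ.erase i, P i * M * P j := by
    intro M
    rw [Matrix.mul_sum, Matrix.sum_mul, ← Finset.sum_sub_distrib]
    refine Finset.sum_congr rfl fun i _ => ?_
    rw [Matrix.mul_sum, Matrix.sum_mul, ← Finset.sum_sub_distrib]
    refine Finset.sum_congr rfl fun j hj => ?_
    have hji : j ≠ i := Finset.ne_of_mem_erase hj
    have hαne : α i - α j ≠ 0 := sub_ne_zero.mpr fun h => hji (hαinj h).symm
    rw [mul_smul_comm, smul_mul_assoc, ← mul_assoc, ← mul_assoc, hAP i,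
      smul_mul_assoc, smul_mul_assoc, mul_assoc (P i * M), hPA j, mul_smul_comm,
      smul_smul, smul_smul, ← sub_smul, ← mul_sub, inv_mul_cancel₀ hαne, one_smul,
      mul_assoc]
  have diag0 : ∀ (X : Matrix (Fin n) (Fin n) ℝ) i, P i * (A * X - X * A) * P i = 0 := by
    intro X i
    have h : P i * (A * X - X * A) * P i
        = (P i * A) * X * P i - P i * X * (A * P i) := by noncomm_ring
    rw [h, hPA i, hAP i, smul_mul_assoc, smul_mul_assoc, mul_smul_comm, mul_assoc, sub_self]
  have hfull : ∀ M : Matrix (Fin n) (Fin n) ℝ, ∑ i, ∑ j, P i * M * P j = M := by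
    intro M
    have h : ∀ i : Fin d, ∑ j, P i * M * P j = P i * M := by
      intro i; rw [← Matrix.mul_sum, hPsum, mul_one]
    rw [Finset.sum_congr rfl fun i _ => h i, ← Finset.sum_mul, hPsum, one_mul]
  have herase : ∀ M : Matrix (Fin n) (Fin n) ℝ,
      ∑ i, ∑ j ∈ Finset.univ.erase i, P i * M * P j = M - ∑ i, P i * M * P i := by
    intro M
    simp_rw [Finset.sum_erase_eq_sub (Finset.mem_univ _)]
    rw [Finset.sum_sub_distrib, hfull]
  have hterm : ∀ (X : Matrix (Fin n) (Fin n) ℝ) (k l i j : Fin d),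
      P i * (P k * X * P l) * P j = if i = k ∧ l = j then P i * X * P j else 0 := by
    intro X k l i j
    have h : P i * (P k * X * P l) * P j = (P i * P k) * X * (P l * P j) := by noncomm_ring
    rw [h, hProj, hProj]
    by_cases h1 : i = k <;> by_cases h2 : l = j <;> simp [h1, h2]
  have habsorb : ∀ (X : Matrix (Fin n) (Fin n) ℝ) (i j : Fin d), j ≠ i →
      P i * (∑ k, ∑ l ∈ Finset.univ.erase k, P k * X * P l) * P j = P i * X * P j := by
    intro X i j hji
    rw [Matrix.mul_sum, Matrix.sum_mul]
    rw [Finset.sum_eq_single i]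
    · rw [Matrix.mul_sum, Matrix.sum_mul]
      simp_rw [hterm]
      simp [Finset.sum_ite_eq, hji]
    · intro k _ hk
      rw [Matrix.mul_sum, Matrix.sum_mul]
      simp_rw [hterm]
      simp [Ne.symm hk]
    · simp
  constructor
  · intro X
    rw [key (A * X - X * A), herase]
    simp [diag0 X]
  · intro X
    rw [key X]
    refine Finset.sum_congr rfl fun i _ => Finset.sum_congr rfl fun j hj => ?_
    rw [habsorb X i j (Finset.ne_of_mem_erase hj)]
end
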